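/- Let φ(x) = Q_1(x) = sqrt(4/(x²+1)). Then ∫_ℝ [ -(1/2⁶)φ² + (9/2⁷)φ⁴ + (13/2⁶)φ⁶ - (59/2⁸)φ⁸ + (5/2⁶)φ¹⁰ - (9/2¹⁰)φ¹² - (1/2²)(φ')² + (15/2⁴)φ²(φ')² - (5/2²)φ⁴(φ')² + (11/2⁵)φ⁶(φ')² - (1/2²)(φ')⁴ ] dx = 0. -/

import Mathlib

open MeasureTheory Real

noncomputable def phi1 (x : ℝ) : ℝ := Real.sqrt (4 / (x ^ 2 + 1))

open Filter Polynomial Topology in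
private lemma aux17_main :
    ∫ x : ℝ, ((-(1:ℝ)/16) * (x^2+1)⁻¹ + (1/8) * ((x^2+1)⁻¹)^2 + 29 * ((x^2+1)⁻¹)^3
      - 158 * ((x^2+1)⁻¹)^4 + 256 * ((x^2+1)⁻¹)^5 - 128 * ((x^2+1)⁻¹)^6) = 0 := by
  set hfun : ℝ → ℝ := fun x => (-(1:ℝ)/16) * (x^2+1)⁻¹ + (1/8) * ((x^2+1)⁻¹)^2
      + 29 * ((x^2+1)⁻¹)^3 - 158 * ((x^2+1)⁻¹)^4 + 256 * ((x^2+1)⁻¹)^5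
      - 128 * ((x^2+1)⁻¹)^6 with hfun_def
  set Fa : ℝ → ℝ := fun x =>
      (x^9/16 + x^7/4 - 217*x^5/40 + 25*x^3/4 - 15*x/16) / (x^2+1)^5 with Fa_def
  have hu : ∀ x : ℝ, (0:ℝ) < x^2 + 1 := fun x => by positivity
  -- derivative
  have hderiv : ∀ x : ℝ, HasDerivAt Fa (hfun x) x := by
    intro x
    have h1 : HasDerivAt (fun y : ℝ => y^2 + 1) (2*x) x := by
      simpa using (hasDerivAt_pow 2 x).add_const 1
    have hden : HasDerivAt (fun y : ℝ => (y^2+1)^5) ((5:ℕ) * (x^2+1)^4 * (2*x)) x :=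
      h1.pow 5
    have hnum : HasDerivAt (fun y : ℝ =>
        y^9/16 + y^7/4 - 217*y^5/40 + 25*y^3/4 - 15*y/16)
        ((9:ℕ)*x^8/16 + (7:ℕ)*x^6/4 - 217*((5:ℕ)*x^4)/40 + 25*((3:ℕ)*x^2)/4 - 15*1/16)
        x := by
      exact (((((hasDerivAt_pow 9 x).div_const 16).add
        ((hasDerivAt_pow 7 x).div_const 4)).sub
        (((hasDerivAt_pow 5 x).const_mul (217:ℝ)).div_const 40)).add
        (((hasDerivAt_pow 3 x).const_mul (25:ℝ)).div_const 4)).sub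
        (((hasDerivAt_id x).const_mul (15:ℝ)).div_const 16)
    have hF := hnum.div hden (by positivity)
    refine hF.congr_deriv ?_
    have hx : (x:ℝ)^2 + 1 ≠ 0 := (hu x).ne'
    rw [hfun_def]
    field_simp [hfun_def]
    ring
  -- integrability
  have hcont : Continuous hfun := by
    rw [hfun_def]
    fun_prop (disch := intro x; positivity)
  have hint : Integrable hfun := by
    apply Integrable.mono' (integrable_inv_one_add_sq.const_mul 600)
      hcont.aestronglyMeasurable
    filter_upwards with x
    have hw0 : (0:ℝ) < (x^2+1)⁻¹ := by positivity
    have hw1 : (x^2+1)⁻¹ ≤ 1 := by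
      apply inv_le_one_of_one_le₀; nlinarith [sq_nonneg x]
    set w : ℝ := (x^2+1)⁻¹ with hw
    have p2 : w^2 ≤ w := pow_le_of_le_one hw0.le hw1 (by norm_num)
    have p3 : w^3 ≤ w := pow_le_of_le_one hw0.le hw1 (by norm_num)
    have p4 : w^4 ≤ w := pow_le_of_le_one hw0.le hw1 (by norm_num)
    have p5 : w^5 ≤ w := pow_le_of_le_one hw0.le hw1 (by norm_num)
    have p6 : w^6 ≤ w := pow_le_of_le_one hw0.le hw1 (by norm_num)
    have q2 : (0:ℝ) ≤ w^2 := by positivity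
    have q3 : (0:ℝ) ≤ w^3 := by positivity
    have q4 : (0:ℝ) ≤ w^4 := by positivity
    have q5 : (0:ℝ) ≤ w^5 := by positivity
    have q6 : (0:ℝ) ≤ w^6 := by positivity
    have hrw : (600:ℝ) * (1 + x^2)⁻¹ = 600 * w := by rw [hw, add_comm]
    rw [hrw, hfun_def, Real.norm_eq_abs, abs_le]
    constructor <;> simp only [← hw] <;> nlinarith
  -- limits
  have hodd : ∀ y : ℝ, Fa (-y) = - Fa y := by
    intro y
    have hy : (y:ℝ)^2 + 1 ≠ 0 := (hu y).ne'
    rw [Fa_def]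
    have h2 : ((-y)^2 + 1) = (y^2+1) := by ring
    simp only [h2]
    field_simp
    ring
  have htop : Tendsto Fa atTop (𝓝 0) := by
    have hdeg : (C (1/16:ℝ) * X^9 + C (1/4) * X^7 - C (217/40) * X^5
        + C (25/4) * X^3 - C (15/16) * X).degree
        < ((X^2 + C (1:ℝ))^5).degree := by
      have h1 : (C (1/16:ℝ) * X^9 + C (1/4) * X^7 - C (217/40) * X^5
          + C (25/4) * X^3 - C (15/16) * X).degree ≤ 9 := by
        compute_degree
      have h2 : ((X^2 + C (1:ℝ))^5).degree = 10 := by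
        compute_degree!
      exact lt_of_le_of_lt h1 (by rw [h2]; norm_num)
    have ht0 := Polynomial.div_tendsto_zero_of_degree_lt _ _ hdeg
    refine ht0.congr fun y => ?_
    rw [Fa_def]
    simp only [eval_add, eval_sub, eval_mul, eval_pow, eval_C, eval_X]
    ring
  have hbot : Tendsto Fa atBot (𝓝 0) := by
    have h1 := htop.comp tendsto_neg_atBot_atTop
    have h2 : (Fa ∘ (fun y : ℝ => -y)) = fun y => - Fa y := funext fun y => hodd y
    rw [h2] at h1
    simpa using h1.neg
  simpa using integral_of_hasDerivAt_of_tendsto hderiv hint hbot htop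

theorem stmt_17 :
    ∫ x : ℝ,
      (-(1 / 2 ^ 6) * (phi1 x) ^ 2 + (9 / 2 ^ 7) * (phi1 x) ^ 4
        + (13 / 2 ^ 6) * (phi1 x) ^ 6 - (59 / 2 ^ 8) * (phi1 x) ^ 8
        + (5 / 2 ^ 6) * (phi1 x) ^ 10 - (9 / 2 ^ 10) * (phi1 x) ^ 12
        - (1 / 2 ^ 2) * (deriv phi1 x) ^ 2
        + (15 / 2 ^ 4) * (phi1 x) ^ 2 * (deriv phi1 x) ^ 2
        - (5 / 2 ^ 2) * (phi1 x) ^ 4 * (deriv phi1 x) ^ 2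
        + (11 / 2 ^ 5) * (phi1 x) ^ 6 * (deriv phi1 x) ^ 2
        - (1 / 2 ^ 2) * (deriv phi1 x) ^ 4) = 0 := by
  have hu : ∀ x : ℝ, (0:ℝ) < x^2 + 1 := fun x => by positivity
  have hrep : phi1 = fun y : ℝ => 2 / Real.sqrt (y^2 + 1) := by
    funext y
    unfold phi1
    rw [show (4:ℝ)/(y^2+1) = 4 * (y^2+1)⁻¹ by ring,
      Real.sqrt_mul (by norm_num : (0:ℝ) ≤ 4), Real.sqrt_inv,
      show Real.sqrt 4 = 2 by
        rw [show (4:ℝ) = 2^2 by norm_num, Real.sqrt_sq (by norm_num : (0:ℝ) ≤ 2)],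
      div_eq_mul_inv]
  have hsq : ∀ x : ℝ, (phi1 x)^2 = 4 / (x^2+1) := by
    intro x
    unfold phi1
    exact Real.sq_sqrt (by positivity)
  have hd : ∀ x : ℝ, HasDerivAt phi1 (-(2*x) / (Real.sqrt (x^2+1) * (x^2+1))) x := by
    intro x
    have hpos : (0:ℝ) < x^2 + 1 := hu x
    have hs0 : Real.sqrt (x^2+1) ≠ 0 := by positivity
    have h1 : HasDerivAt (fun y : ℝ => y^2 + 1) (2*x) x := by
      simpa using (hasDerivAt_pow 2 x).add_const 1
    have h2 : HasDerivAt (fun y : ℝ => Real.sqrt (y^2+1))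
        (1 / (2 * Real.sqrt (x^2+1)) * (2*x)) x :=
      (Real.hasDerivAt_sqrt hpos.ne').comp x h1
    have h3 := (hasDerivAt_const x (2:ℝ)).div h2 hs0
    rw [hrep]
    refine h3.congr_deriv ?_
    rw [Real.sq_sqrt hpos.le]
    field_simp
    ring
  have hdsq : ∀ x : ℝ, (deriv phi1 x)^2 = 4 * x^2 / (x^2+1)^3 := by
    intro x
    rw [(hd x).deriv, div_pow, mul_pow, Real.sq_sqrt (hu x).le]
    rw [show (-(2*x))^2 = 4*x^2 by ring, show ((x:ℝ)^2+1) * (x^2+1)^2 = (x^2+1)^3 by ring]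
  have hpt : ∀ x : ℝ,
      (-(1 / 2 ^ 6) * (phi1 x) ^ 2 + (9 / 2 ^ 7) * (phi1 x) ^ 4
        + (13 / 2 ^ 6) * (phi1 x) ^ 6 - (59 / 2 ^ 8) * (phi1 x) ^ 8
        + (5 / 2 ^ 6) * (phi1 x) ^ 10 - (9 / 2 ^ 10) * (phi1 x) ^ 12
        - (1 / 2 ^ 2) * (deriv phi1 x) ^ 2
        + (15 / 2 ^ 4) * (phi1 x) ^ 2 * (deriv phi1 x) ^ 2
        - (5 / 2 ^ 2) * (phi1 x) ^ 4 * (deriv phi1 x) ^ 2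
        + (11 / 2 ^ 5) * (phi1 x) ^ 6 * (deriv phi1 x) ^ 2
        - (1 / 2 ^ 2) * (deriv phi1 x) ^ 4)
      = ((-(1:ℝ)/16) * (x^2+1)⁻¹ + (1/8) * ((x^2+1)⁻¹)^2 + 29 * ((x^2+1)⁻¹)^3
        - 158 * ((x^2+1)⁻¹)^4 + 256 * ((x^2+1)⁻¹)^5 - 128 * ((x^2+1)⁻¹)^6) := by
    intro x
    have h2 := hsq x
    have hd2 := hdsq x
    have h4 : (phi1 x)^4 = (4/(x^2+1))^2 := by rw [← h2]; ring
    have h6 : (phi1 x)^6 = (4/(x^2+1))^3 := by rw [← h2]; ring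
    have h8 : (phi1 x)^8 = (4/(x^2+1))^4 := by rw [← h2]; ring
    have h10 : (phi1 x)^10 = (4/(x^2+1))^5 := by rw [← h2]; ring
    have h12 : (phi1 x)^12 = (4/(x^2+1))^6 := by rw [← h2]; ring
    have hd4 : (deriv phi1 x)^4 = (4*x^2/(x^2+1)^3)^2 := by rw [← hd2]; ring
    rw [h12, h10, h8, h6, h4, h2, hd4, hd2]
    have hx : (x:ℝ)^2 + 1 ≠ 0 := (hu x).ne'
    field_simp
    ring
  rw [MeasureTheory.integral_congr_ae (Filter.Eventually.of_forall hpt)]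
  exact aux17_main
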